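/- There exists a constant c > 0 such that for every X3S instance (𝒳, ℳ) with r := 3|ℳ| ≥ c, every surprise-optimal clustering ζ of the reduction graph G(𝒳, ℳ) satisfies i_p(ζ) − i_e(ζ) ≤ r⁴/2. -/

import Mathlib

open Finset

/-- The surprise value `S(p, m, i_p, i_e)`. -/
def surpriseVal (p m ip ie : ℕ) : ℚ :=
  (∑ i ∈ Finset.Icc ie m, (ip.choose i * (p - ip).choose (m - i) : ℚ)) / (p.choose m)

variable {V : Type*} [Fintype V] [DecidableEq V]

open scoped Classical in
/-- The number of intracluster edges of the clustering `ζ`. -/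
noncomputable def intraEdges (G : SimpleGraph V) (ζ : Finpartition (univ : Finset V)) : ℕ :=
  (G.edgeFinset.filter fun e => ∃ P ∈ ζ.parts, ∀ v ∈ e, v ∈ P).card

/-- The number of intracluster vertex pairs of the clustering `ζ`. -/
def intraPairs (ζ : Finpartition (univ : Finset V)) : ℕ :=
  ∑ P ∈ ζ.parts, (P.card).choose 2

open scoped Classical in
/-- The surprise of the clustering `ζ` of the graph `G`. -/
noncomputable def surprise (G : SimpleGraph V) (ζ : Finpartition (univ : Finset V)) : ℚ :=
  surpriseVal ((Fintype.card V).choose 2) G.edgeFinset.card (intraPairs ζ) (intraEdges G ζ)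

/-- The vertex type of the reduction graph for the X3S instance `(X, M)`: one clique
`C(M)` of `r² = (3|M|)²` vertices for each `M ∈ ℳ`, plus one vertex `v(x)` per `x ∈ X`. -/
abbrev RVertex {X : Type} (M : Finset (Finset X)) : Type :=
  ({s // s ∈ M} × Fin ((3 * M.card) ^ 2)) ⊕ X

/-- The reduction graph `G(X, M)`: all pairs inside each clique `C(M)` are edges, all
pairs inside `V_X` are edges, and `v(x)` is joined to all of `C(M)` iff `x ∈ M`. -/
def reductionGraph {X : Type} (M : Finset (Finset X)) : SimpleGraph (RVertex M) where
  Adj u v :=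
    match u, v with
    | Sum.inl (s, i), Sum.inl (t, j) => s = t ∧ i ≠ j
    | Sum.inl (s, _), Sum.inr x => x ∈ (s : Finset X)
    | Sum.inr x, Sum.inl (s, _) => x ∈ (s : Finset X)
    | Sum.inr x, Sum.inr y => x ≠ y
  symm := by
    refine ⟨?_⟩
    rintro (⟨s, i⟩ | x) (⟨t, j⟩ | y) h
    · exact ⟨h.1.symm, fun hji => h.2 hji.symm⟩
    · exact h
    · exact h
    · exact fun hyx => h hyx.symm
  loopless := by
    refine ⟨?_⟩
    rintro (⟨s, i⟩ | x) h
    · exact h.2 rfl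
    · exact h rfl

namespace Stmt15Aux

lemma pow_le_choose {R v : ℕ} : ∀ u : ℕ, R * u ≤ v + 1 → R ^ u ≤ (v + u).choose u := by
  intro u
  induction u with
  | zero => simp
  | succ u ih =>
    intro h
    have h' : R * u ≤ v + 1 := le_trans (Nat.mul_le_mul_left R (Nat.le_succ u)) h
    have ihu := ih h'
    have key : (v + u + 1) * ((v + u).choose u) = (v + u + 1).choose (u + 1) * (u + 1) :=
      Nat.add_one_mul_choose_eq (v + u) u
    have hr : R * (u + 1) ≤ v + u + 1 := by omega
    have h2 : R ^ (u + 1) * (u + 1) ≤ (v + (u + 1)).choose (u + 1) * (u + 1) := by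
      calc R ^ (u + 1) * (u + 1) = R ^ u * (R * (u + 1)) := by ring
        _ ≤ (v + u).choose u * (v + u + 1) := Nat.mul_le_mul ihu hr
        _ = (v + u + 1) * ((v + u).choose u) := by ring
        _ = (v + u + 1).choose (u + 1) * (u + 1) := key
        _ = (v + (u + 1)).choose (u + 1) * (u + 1) := by rw [Nat.add_assoc]
    exact Nat.le_of_mul_le_mul_right h2 (Nat.succ_pos u)

lemma choose_chain {p a B : ℕ} (hB : p ≤ B * (a + 1)) :
    ∀ s : ℕ, p.choose (a + s) ≤ p.choose a * B ^ s := by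
  intro s
  induction s with
  | zero => simp
  | succ s ih =>
    have key : p.choose (a + s + 1) * (a + s + 1) = p.choose (a + s) * (p - (a + s)) :=
      Nat.choose_succ_right_eq p (a + s)
    have h1 : p - (a + s) ≤ B * (a + s + 1) := by
      have h2 : B * (a + 1) ≤ B * (a + s + 1) := Nat.mul_le_mul_left _ (by omega)
      omega
    have h2 : p.choose (a + s + 1) * (a + s + 1)
        ≤ (p.choose a * B ^ (s + 1)) * (a + s + 1) := by
      calc p.choose (a + s + 1) * (a + s + 1) = p.choose (a + s) * (p - (a + s)) := key
        _ ≤ (p.choose a * B ^ s) * (B * (a + s + 1)) := Nat.mul_le_mul ih h1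
        _ = (p.choose a * B ^ (s + 1)) * (a + s + 1) := by ring
    have h3 := Nat.le_of_mul_le_mul_right h2 (show 0 < a + s + 1 by omega)
    rwa [show a + (s + 1) = a + s + 1 by omega]

lemma choose_mono_half {p a : ℕ} (ha : 2 * a ≤ p) : ∀ i, i ≤ a → p.choose i ≤ p.choose a := by
  induction a with
  | zero => intro i hi; interval_cases i; exact le_rfl
  | succ a iha =>
    intro i hi
    rcases Nat.eq_or_lt_of_le hi with rfl | hlt
    · exact le_rfl
    · have h1 : p.choose i ≤ p.choose a := iha (by omega) i (by omega)
      have hhalf : a + 1 ≤ p / 2 := (Nat.le_div_iff_mul_le (by norm_num)).mpr (by omega)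
      have h2 : p.choose a ≤ p.choose (a + 1) :=
        Nat.choose_le_succ_of_lt_half_left (by omega)
      exact h1.trans h2

lemma choose_sub_comm (P A B : ℕ) :
    P.choose A * (P - A).choose B = P.choose B * (P - B).choose A := by
  by_cases h : A + B ≤ P
  · have e1 := Nat.choose_mul (n := P) (Nat.le_add_right A B)
    have e2 := Nat.choose_mul (n := P) (Nat.le_add_left B A)
    rw [Nat.add_sub_cancel_left] at e1
    rw [Nat.add_sub_cancel] at e2
    have e3 : (A + B).choose A = (A + B).choose B := Nat.choose_symm_add
    rw [← e1, ← e2, e3]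
  · have hz : ∀ U W : ℕ, P < U + W → P.choose U * (P - U).choose W = 0 := by
      intro U W hUW
      rcases le_or_gt U P with hU | hU
      · rw [Nat.choose_eq_zero_of_lt (show P - U < W by omega), Nat.mul_zero]
      · rw [Nat.choose_eq_zero_of_lt hU, Nat.zero_mul]
    rw [hz A B (by omega), hz B A (by omega)]

lemma big_identity {p m ip ie : ℕ} (h1 : ie ≤ ip) (h2 : ip ≤ p) (h3 : ie ≤ m) (h4 : m ≤ p) :
    p.choose ip * (ip.choose ie * (p - ip).choose (m - ie))
      = p.choose m * (m.choose ie * (p - m).choose (ip - ie)) := by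
  have e1 := Nat.choose_mul (n := p) h1
  have e2 := Nat.choose_mul (n := p) h3
  have hJ := choose_sub_comm (p - ie) (ip - ie) (m - ie)
  rw [show p - ie - (ip - ie) = p - ip by omega, show p - ie - (m - ie) = p - m by omega] at hJ
  calc p.choose ip * (ip.choose ie * (p - ip).choose (m - ie))
      = (p.choose ip * ip.choose ie) * (p - ip).choose (m - ie) := by ring
    _ = (p.choose ie * (p - ie).choose (ip - ie)) * (p - ip).choose (m - ie) := by rw [e1]
    _ = p.choose ie * ((p - ie).choose (ip - ie) * (p - ip).choose (m - ie)) := by ring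
    _ = p.choose ie * ((p - ie).choose (m - ie) * (p - m).choose (ip - ie)) := by rw [hJ]
    _ = (p.choose ie * (p - ie).choose (m - ie)) * (p - m).choose (ip - ie) := by ring
    _ = (p.choose m * m.choose ie) * (p - m).choose (ip - ie) := by rw [← e2]
    _ = _ := by ring


lemma two_mul_choose_two (n : ℕ) : 2 * n.choose 2 = n * (n - 1) := by
  rw [Nat.choose_two_right]
  refine Nat.mul_div_cancel' ?_
  rcases n with _ | t
  · simp
  · rw [show t + 1 - 1 = t by omega, Nat.mul_comm]
    exact (Nat.even_mul_succ_self t).two_dvd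

set_option maxHeartbeats 1000000 in
lemma main_arith (k x a m p ip ie : ℕ)
    (hk : 40000 ≤ k)
    (hx3 : 3 ≤ x) (hxk : x ≤ 3 * k)
    (ha_low : 9 * k ^ 3 * (9 * k ^ 2 - 1) ≤ 2 * a)
    (ha_up : 2 * a ≤ 9 * k ^ 3 * (9 * k ^ 2 - 1) + x * (x - 1))
    (hma : a ≤ m) (hm_up : m ≤ a + 27 * k ^ 3)
    (hp : 2 * p = (9 * k ^ 3 + x) * (9 * k ^ 3 + x - 1))
    (hmp : m ≤ p)
    (hie_ip : ie ≤ ip) (hie_m : ie ≤ m) (hip_p : ip ≤ p) (hsum : ip + m ≤ p + ie)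
    (hstar : ip.choose ie * (p - ip).choose (m - ie) ≤ (p - a).choose (m - a))
    (hstar2 : ip.choose m ≤ (p - a).choose (m - a)) :
    2 * (ip - ie) ≤ 81 * k ^ 4 := by
  -- remove subtractions
  obtain ⟨y, rfl⟩ : ∃ y, x = y + 1 := ⟨x - 1, by omega⟩
  have hy : 2 ≤ y := by omega
  rw [Nat.add_sub_cancel] at ha_up
  rw [show 9 * k ^ 3 + (y + 1) - 1 = 9 * k ^ 3 + y by omega] at hp
  have hk2 : 40000 ≤ k ^ 2 := le_trans hk (Nat.le_self_pow (by omega) k)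
  obtain ⟨A, hA⟩ : ∃ A, 9 * k ^ 2 = A + 1 := ⟨9 * k ^ 2 - 1, by omega⟩
  rw [hA, Nat.add_sub_cancel] at ha_low ha_up
  -- power ladders
  have hl2 : k ^ 2 ≤ k ^ 3 := Nat.pow_le_pow_right (by omega) (by omega)
  have hl3 : k ^ 3 ≤ k ^ 4 := Nat.pow_le_pow_right (by omega) (by omega)
  have hl4 : k ^ 4 ≤ k ^ 5 := Nat.pow_le_pow_right (by omega) (by omega)
  have hl5 : k ^ 5 ≤ k ^ 6 := Nat.pow_le_pow_right (by omega) (by omega)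
  have lk3 : 40000 * k ^ 3 ≤ k ^ 4 := by
    calc 40000 * k ^ 3 ≤ k * k ^ 3 := Nat.mul_le_mul_right _ hk
      _ = k ^ 4 := by ring
  have lk4 : 40000 * k ^ 4 ≤ k ^ 5 := by
    calc 40000 * k ^ 4 ≤ k * k ^ 4 := Nat.mul_le_mul_right _ hk
      _ = k ^ 5 := by ring
  have lk5 : 40000 * k ^ 5 ≤ k ^ 6 := by
    calc 40000 * k ^ 5 ≤ k * k ^ 5 := Nat.mul_le_mul_right _ hk
      _ = k ^ 6 := by ring
  -- products with A
  have eA5 : 9 * k ^ 3 * A + 9 * k ^ 3 = 81 * k ^ 5 := by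
    calc 9 * k ^ 3 * A + 9 * k ^ 3 = 9 * k ^ 3 * (A + 1) := by ring
      _ = 9 * k ^ 3 * (9 * k ^ 2) := by rw [hA]
      _ = 81 * k ^ 5 := by ring
  have eA6 : 9 * k ^ 4 * A + 9 * k ^ 4 = 81 * k ^ 6 := by
    calc 9 * k ^ 4 * A + 9 * k ^ 4 = 9 * k ^ 4 * (A + 1) := by ring
      _ = 9 * k ^ 4 * (9 * k ^ 2) := by rw [hA]
      _ = 81 * k ^ 6 := by ring
  have hyy : (y + 1) * y ≤ 9 * k ^ 2 := by
    calc (y + 1) * y ≤ (3 * k) * (3 * k) := Nat.mul_le_mul hxk (by omega)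
      _ = 9 * k ^ 2 := by ring
  -- size facts
  have f1 : 36 * k ^ 5 ≤ a := by omega
  have f2 : m ≤ 41 * k ^ 5 := by omega
  have hpl : 81 * k ^ 6 ≤ 2 * p := by
    calc (81 : ℕ) * k ^ 6 = (9 * k ^ 3) * (9 * k ^ 3) := by ring
      _ ≤ (9 * k ^ 3 + (y + 1)) * (9 * k ^ 3 + y) := Nat.mul_le_mul (by omega) (by omega)
      _ = 2 * p := hp.symm
  have f3 : 40 * k ^ 6 ≤ p := by omega
  have hpu : 2 * p ≤ 81 * k ^ 6 + 54 * k ^ 4 + 9 * k ^ 2 := by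
    calc 2 * p = (9 * k ^ 3 + (y + 1)) * (9 * k ^ 3 + y) := hp
      _ ≤ (9 * k ^ 3 + 3 * k) * (9 * k ^ 3 + 3 * k) := Nat.mul_le_mul (by omega) (by omega)
      _ = 81 * k ^ 6 + 54 * k ^ 4 + 9 * k ^ 2 := by ring
  have f4 : p ≤ 41 * k ^ 6 := by omega
  have f5 : k * m ≤ p + 23 * k ^ 4 := by
    have c1 : k * (2 * a) ≤ k * (9 * k ^ 3 * A + 9 * k ^ 2) :=
      Nat.mul_le_mul_left _ (by omega)
    have c2 : k * (9 * k ^ 3 * A + 9 * k ^ 2) = 9 * k ^ 4 * A + 9 * k ^ 3 := by ring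
    have c4 : k * m ≤ k * (a + 27 * k ^ 3) := Nat.mul_le_mul_left _ hm_up
    have c5 : k * (a + 27 * k ^ 3) = k * a + 27 * k ^ 4 := by ring
    have c6 : k * (2 * a) = 2 * (k * a) := by ring
    omega
  -- choose facts
  have hap : a ≤ p := le_trans hma hmp
  have Ca_pos : 0 < p.choose a := Nat.choose_pos hap
  have Cm_pos : 0 < p.choose m := Nat.choose_pos hmp
  have hchain : ∀ s : ℕ, p.choose (a + s) ≤ p.choose a * (3 * k) ^ s := by
    refine choose_chain ?_
    have c1 : 3 * k * (36 * k ^ 5) ≤ 3 * k * a := Nat.mul_le_mul_left _ f1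
    have c2 : 3 * k * (36 * k ^ 5) = 108 * k ^ 6 := by ring
    have c3 : 3 * k * (a + 1) = 3 * k * a + 3 * k := by ring
    omega
  have I1 : p.choose a * (p - a).choose (m - a) = p.choose m * m.choose a := by
    have := big_identity (le_refl a) hap hma hmp
    simpa using this
  have hE : m - a ≤ 27 * k ^ 3 := by omega
  have hCma : m.choose a ≤ (3 * k) ^ (5 * (m - a)) := by
    have h1 : m.choose a = m.choose (m - a) := (Nat.choose_symm hma).symm
    have h2 : m ≤ (3 * k) ^ 5 := by
      have : (3 * k) ^ 5 = 243 * k ^ 5 := by ring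
      omega
    calc m.choose a = m.choose (m - a) := h1
      _ ≤ m ^ (m - a) := Nat.choose_le_pow _ _
      _ ≤ ((3 * k) ^ 5) ^ (m - a) := Nat.pow_le_pow_left h2 _
      _ = (3 * k) ^ (5 * (m - a)) := by rw [← pow_mul]
  have h3k1 : 1 < 3 * k := by omega
  have hCpm : p.choose m ≤ p.choose a * (3 * k) ^ (m - a) := by
    have := hchain (m - a)
    rwa [show a + (m - a) = m by omega] at this
  -- Step B : ip ≤ m + 10 k^4
  have stepB : ip ≤ m + 10 * k ^ 4 := by
    by_contra hcon
    push_neg at hcon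
    have h1 : (3 * k) ^ (10 * k ^ 4) ≤ (m + 10 * k ^ 4).choose (10 * k ^ 4) := by
      refine pow_le_choose _ ?_
      have : 3 * k * (10 * k ^ 4) = 30 * k ^ 5 := by ring
      omega
    have h2 : (m + 10 * k ^ 4).choose (10 * k ^ 4) = (m + 10 * k ^ 4).choose m :=
      (Nat.choose_symm_add).symm
    have h3 : (m + 10 * k ^ 4).choose m ≤ ip.choose m := Nat.choose_le_choose m (by omega)
    have h5 : p.choose a * ip.choose m ≤ p.choose a * ((3 * k) ^ (m - a) * m.choose a) := by
      calc p.choose a * ip.choose m ≤ p.choose a * (p - a).choose (m - a) :=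
            Nat.mul_le_mul_left _ hstar2
        _ = p.choose m * m.choose a := I1
        _ ≤ (p.choose a * (3 * k) ^ (m - a)) * m.choose a := Nat.mul_le_mul_right _ hCpm
        _ = p.choose a * ((3 * k) ^ (m - a) * m.choose a) := by ring
    have h6 : ip.choose m ≤ (3 * k) ^ (m - a) * m.choose a :=
      Nat.le_of_mul_le_mul_left h5 Ca_pos
    have h7 : (3 * k) ^ (10 * k ^ 4) ≤ (3 * k) ^ (6 * (m - a)) := by
      calc (3 * k) ^ (10 * k ^ 4) ≤ (m + 10 * k ^ 4).choose m := h2 ▸ h1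
        _ ≤ ip.choose m := h3
        _ ≤ (3 * k) ^ (m - a) * m.choose a := h6
        _ ≤ (3 * k) ^ (m - a) * (3 * k) ^ (5 * (m - a)) := Nat.mul_le_mul_left _ hCma
        _ = (3 * k) ^ (m - a + 5 * (m - a)) := by rw [← pow_add]
        _ = (3 * k) ^ (6 * (m - a)) := by rw [show m - a + 5 * (m - a) = 6 * (m - a) by ring]
    have h8 := (Nat.pow_le_pow_iff_right h3k1).mp h7
    omega
  -- main step
  by_contra hgoal
  push_neg at hgoal
  have hd_low : 40 * k ^ 4 < ip - ie := by omega
  set d := ip - ie with hd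
  have hCpip : p.choose ip ≤ p.choose a * (3 * k) ^ (ip - a) := by
    rcases le_or_gt ip a with h | h
    · have h2a : 2 * a ≤ p := by omega
      have h1 : p.choose ip ≤ p.choose a := choose_mono_half h2a ip h
      exact le_trans h1 (le_mul_of_one_le_right (Nat.zero_le _)
        (Nat.one_le_pow _ _ (by omega)))
    · have := hchain (ip - a)
      rwa [show a + (ip - a) = ip by omega] at this
  have I2 := big_identity hie_ip hip_p hie_m hmp
  have step1 : p.choose m * ((m.choose ie * (p - m).choose d) * p.choose a)
      ≤ p.choose m * (p.choose a * ((3 * k) ^ (ip - a) * m.choose a)) := by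
    calc p.choose m * ((m.choose ie * (p - m).choose d) * p.choose a)
        = (p.choose ip * (ip.choose ie * (p - ip).choose (m - ie))) * p.choose a := by
          rw [I2]; ring
      _ ≤ (p.choose ip * (p - a).choose (m - a)) * p.choose a :=
          Nat.mul_le_mul_right _ (Nat.mul_le_mul_left _ hstar)
      _ = p.choose ip * (p.choose a * (p - a).choose (m - a)) := by ring
      _ = p.choose ip * (p.choose m * m.choose a) := by rw [I1]
      _ ≤ (p.choose a * (3 * k) ^ (ip - a)) * (p.choose m * m.choose a) :=
          Nat.mul_le_mul_right _ hCpip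
      _ = p.choose m * (p.choose a * ((3 * k) ^ (ip - a) * m.choose a)) := by ring
  have step2 : m.choose ie * (p - m).choose d ≤ (3 * k) ^ (ip - a) * m.choose a := by
    have h1 := Nat.le_of_mul_le_mul_left step1 Cm_pos
    have h2 : p.choose a * (m.choose ie * (p - m).choose d)
        ≤ p.choose a * ((3 * k) ^ (ip - a) * m.choose a) := by
      calc p.choose a * (m.choose ie * (p - m).choose d)
          = (m.choose ie * (p - m).choose d) * p.choose a := by ring
        _ ≤ p.choose a * ((3 * k) ^ (ip - a) * m.choose a) := h1
    exact Nat.le_of_mul_le_mul_left h2 Ca_pos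
  have step3 : (p - m).choose d ≤ (3 * k) ^ (ip - a) * m.choose a := by
    calc (p - m).choose d ≤ m.choose ie * (p - m).choose d :=
          Nat.le_mul_of_pos_left _ (Nat.choose_pos hie_m)
      _ ≤ _ := step2
  have hd_le : d ≤ p - m := by omega
  have hkd : (k - 3) * d ≤ (p - m - d) + 1 := by
    have e1 : d ≤ m + 10 * k ^ 4 := by omega
    have w1 : (k - 3) * d = k * d - 3 * d := by rw [Nat.sub_mul]
    have w2 : (k - 2) * d ≤ (k - 2) * (m + 10 * k ^ 4) := Nat.mul_le_mul_left _ e1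
    have w3 : (k - 2) * d = k * d - 2 * d := by rw [Nat.sub_mul]
    have w4 : (k - 2) * (m + 10 * k ^ 4) = k * (m + 10 * k ^ 4) - 2 * (m + 10 * k ^ 4) := by
      rw [Nat.sub_mul]
    have w5 : k * (m + 10 * k ^ 4) = k * m + 10 * k ^ 5 := by ring
    have w6 : 3 * d ≤ k * d := Nat.mul_le_mul_right _ (by omega)
    omega
  have hlow : (k - 3) ^ d ≤ (p - m).choose d := by
    have h1 : (k - 3) ^ d ≤ ((p - m - d) + d).choose d := pow_le_choose d hkd
    rwa [show p - m - d + d = p - m by omega] at h1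
  have hup2 : (p - m).choose d ≤ (3 * k) ^ (ip - a + 5 * (m - a)) := by
    calc (p - m).choose d ≤ (3 * k) ^ (ip - a) * m.choose a := step3
      _ ≤ (3 * k) ^ (ip - a) * (3 * k) ^ (5 * (m - a)) := Nat.mul_le_mul_left _ hCma
      _ = (3 * k) ^ (ip - a + 5 * (m - a)) := by rw [← pow_add]
  have hexp : ip - a + 5 * (m - a) ≤ 11 * k ^ 4 := by omega
  have hk3 : 1 < k - 3 := by omega
  have h3kk : 3 * k ≤ (k - 3) ^ 2 := by
    obtain ⟨k3, rfl⟩ : ∃ k3, k = k3 + 3 := ⟨k - 3, by omega⟩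
    rw [show k3 + 3 - 3 = k3 by omega]
    have c1 : 3 * (k3 + 3) ≤ 4 * k3 := by omega
    have c2 : 4 * k3 ≤ k3 * k3 := Nat.mul_le_mul_right _ (by omega)
    calc 3 * (k3 + 3) ≤ 4 * k3 := c1
      _ ≤ k3 * k3 := c2
      _ = k3 ^ 2 := (sq k3).symm
  have hfin : (k - 3) ^ d ≤ (k - 3) ^ (2 * (11 * k ^ 4)) := by
    calc (k - 3) ^ d ≤ (3 * k) ^ (ip - a + 5 * (m - a)) := le_trans hlow hup2
      _ ≤ (3 * k) ^ (11 * k ^ 4) := Nat.pow_le_pow_right (by omega) hexp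
      _ ≤ ((k - 3) ^ 2) ^ (11 * k ^ 4) := Nat.pow_le_pow_left h3kk _
      _ = (k - 3) ^ (2 * (11 * k ^ 4)) := by rw [← pow_mul]
  have hfin2 := (Nat.pow_le_pow_iff_right hk3).mp hfin
  omega


variable {V : Type*} [Fintype V] [DecidableEq V]

open scoped Classical in
noncomputable def intraSym (ζ : Finpartition (univ : Finset V)) : Finset (Sym2 V) :=
  (univ : Finset (Sym2 V)).filter fun e => ¬ e.IsDiag ∧ ∃ P ∈ ζ.parts, ∀ v ∈ e, v ∈ P

open scoped Classical in
lemma mem_intraSym {ζ : Finpartition (univ : Finset V)} {e : Sym2 V} :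
    e ∈ intraSym ζ ↔ ¬ e.IsDiag ∧ ∃ P ∈ ζ.parts, ∀ v ∈ e, v ∈ P := by
  simp [intraSym]

lemma intraSym_eq_biUnion (ζ : Finpartition (univ : Finset V)) :
    intraSym ζ = ζ.parts.biUnion fun P => P.offDiag.image Sym2.mk.uncurry := by
  ext e
  rw [mem_intraSym, mem_biUnion]
  constructor
  · rintro ⟨hnd, P, hP, hall⟩
    refine ⟨P, hP, ?_⟩
    induction e with
    | _ u v =>
      rw [mem_image]
      exact ⟨(u, v), Finset.mem_offDiag.mpr
        ⟨hall u (Sym2.mem_mk_left u v), hall v (Sym2.mem_mk_right u v),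
          fun h => hnd (by simpa using h)⟩, rfl⟩
  · rintro ⟨P, hP, he⟩
    rw [mem_image] at he
    obtain ⟨⟨u, v⟩, huv, rfl⟩ := he
    rw [Finset.mem_offDiag] at huv
    refine ⟨by simp [huv.2.2], P, hP, ?_⟩
    intro w hw
    rw [show Function.uncurry Sym2.mk (u, v) = s(u, v) from rfl, Sym2.mem_iff] at hw
    rcases hw with rfl | rfl
    · exact huv.1
    · exact huv.2.1

lemma card_intraSym (ζ : Finpartition (univ : Finset V)) :
    (intraSym ζ).card = intraPairs ζ := by
  rw [intraSym_eq_biUnion, card_biUnion]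
  · unfold intraPairs
    refine Finset.sum_congr rfl fun P _ => ?_
    exact Sym2.card_image_offDiag P
  · intro P hP Q hQ hne
    rw [Function.onFun, Finset.disjoint_left]
    intro e heP heQ
    rw [mem_image] at heP heQ
    obtain ⟨⟨u, v⟩, huv, rfl⟩ := heP
    obtain ⟨⟨u', v'⟩, huv', he'⟩ := heQ
    rw [Finset.mem_offDiag] at huv huv'
    have hu' : u ∈ Q := by
      have : u ∈ s(u', v') := by change u ∈ Sym2.mk.uncurry (u', v'); rw [he']; exact Sym2.mem_mk_left u v
      rw [Sym2.mem_iff] at this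
      rcases this with rfl | rfl
      · exact huv'.1
      · exact huv'.2.1
    exact hne (ζ.eq_of_mem_parts hP hQ huv.1 hu')

open scoped Classical in
lemma intraEdges_eq_card_inter (G : SimpleGraph V) (ζ : Finpartition (univ : Finset V)) :
    intraEdges G ζ = (G.edgeFinset ∩ intraSym ζ).card := by
  unfold intraEdges
  congr 1
  ext e
  simp only [mem_filter, mem_inter, mem_intraSym]
  constructor
  · rintro ⟨he, hc⟩
    exact ⟨he, SimpleGraph.not_isDiag_of_mem_edgeFinset he, hc⟩
  · rintro ⟨he, _, hc⟩
    exact ⟨he, hc⟩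

open scoped Classical in
lemma notdiag_card :
    ((univ : Finset (Sym2 V)).filter fun e => ¬ e.IsDiag).card = (Fintype.card V).choose 2 := by
  rw [← Sym2.card_subtype_not_diag]
  exact (Fintype.card_subtype _).symm

open scoped Classical in
lemma intraEdges_le_intraPairs (G : SimpleGraph V) (ζ : Finpartition (univ : Finset V)) :
    intraEdges G ζ ≤ intraPairs ζ := by
  rw [intraEdges_eq_card_inter, ← card_intraSym]
  exact card_le_card (inter_subset_right)

open scoped Classical in
lemma intraEdges_le_edges (G : SimpleGraph V) (ζ : Finpartition (univ : Finset V)) :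
    intraEdges G ζ ≤ G.edgeFinset.card := by
  rw [intraEdges_eq_card_inter]
  exact card_le_card (inter_subset_left)

open scoped Classical in
lemma intraPairs_le_choose (ζ : Finpartition (univ : Finset V)) :
    intraPairs ζ ≤ (Fintype.card V).choose 2 := by
  rw [← card_intraSym, ← notdiag_card]
  refine card_le_card ?_
  intro e he
  rw [mem_intraSym] at he
  simp [he.1]

open scoped Classical in
lemma intra_sum_le (G : SimpleGraph V) (ζ : Finpartition (univ : Finset V)) :
    intraPairs ζ + G.edgeFinset.card ≤ (Fintype.card V).choose 2 + intraEdges G ζ := by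
  rw [← card_intraSym, intraEdges_eq_card_inter, ← notdiag_card]
  have h1 := Finset.card_union_add_card_inter (intraSym ζ) G.edgeFinset
  have h2 : (intraSym ζ ∪ G.edgeFinset) ⊆ (univ : Finset (Sym2 V)).filter fun e => ¬ e.IsDiag := by
    intro e he
    rcases mem_union.mp he with h | h
    · rw [mem_intraSym] at h; simp [h.1]
    · simp [SimpleGraph.not_isDiag_of_mem_edgeFinset h]
  have h3 := card_le_card h2
  rw [Finset.inter_comm] at h1
  omega

open scoped Classical in
lemma intraEdges_eq_intraPairs_of_cliques (G : SimpleGraph V) (ζ : Finpartition (univ : Finset V))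
    (h : ∀ P ∈ ζ.parts, ∀ u ∈ P, ∀ v ∈ P, u ≠ v → G.Adj u v) :
    intraEdges G ζ = intraPairs ζ := by
  rw [intraEdges_eq_card_inter, ← card_intraSym]
  congr 1
  rw [Finset.inter_eq_right]
  intro e he
  rw [mem_intraSym] at he
  obtain ⟨hnd, P, hP, hall⟩ := he
  induction e with
  | _ u v =>
    rw [SimpleGraph.mem_edgeFinset, SimpleGraph.mem_edgeSet]
    exact h P hP u (hall u (Sym2.mem_mk_left u v)) v (hall v (Sym2.mem_mk_right u v))
      (fun huv => hnd (by simp [huv]))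


open scoped Classical in
lemma edges_le_choose (G : SimpleGraph V) :
    G.edgeFinset.card ≤ (Fintype.card V).choose 2 :=
  SimpleGraph.card_edgeFinset_le_card_choose_two

lemma surpriseVal_self (p m a : ℕ) (ham : a ≤ m) :
    surpriseVal p m a a = ((p - a).choose (m - a) : ℚ) / (p.choose m) := by
  unfold surpriseVal
  congr 1
  rw [Finset.sum_eq_single_of_mem a (by simp [ham])]
  · simp
  · intro b hb hba
    rw [mem_Icc] at hb
    rw [Nat.choose_eq_zero_of_lt (by omega)]
    simp

lemma surpriseVal_term_le (p m ip ie i0 : ℕ) (hi1 : ie ≤ i0) (hi2 : i0 ≤ m) (hmp : m ≤ p) :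
    ((ip.choose i0 : ℚ) * ((p - ip).choose (m - i0) : ℚ)) / (p.choose m)
      ≤ surpriseVal p m ip ie := by
  unfold surpriseVal
  have hpos : (0:ℚ) < (p.choose m : ℚ) := by exact_mod_cast Nat.choose_pos hmp
  gcongr
  exact Finset.single_le_sum (f := fun i => ((ip.choose i : ℚ) * ((p - ip).choose (m - i) : ℚ)))
    (fun i _ => by positivity) (mem_Icc.mpr ⟨hi1, hi2⟩)

open scoped Classical in
lemma term_le_of_opt (G : SimpleGraph V) (ζ ζ' : Finpartition (univ : Finset V))
    (hopt : surprise G ζ ≤ surprise G ζ')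
    (hcl : intraEdges G ζ' = intraPairs ζ')
    (i0 : ℕ) (hi0 : intraEdges G ζ ≤ i0) (hi0m : i0 ≤ G.edgeFinset.card) :
    (intraPairs ζ).choose i0 *
      ((Fintype.card V).choose 2 - intraPairs ζ).choose (G.edgeFinset.card - i0)
      ≤ ((Fintype.card V).choose 2 - intraPairs ζ').choose
          (G.edgeFinset.card - intraPairs ζ') := by
  set p := (Fintype.card V).choose 2 with hp
  set m := G.edgeFinset.card with hm
  have hmp : m ≤ p := SimpleGraph.card_edgeFinset_le_card_choose_two
  have ham : intraPairs ζ' ≤ m := by rw [← hcl]; exact intraEdges_le_edges G ζ'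
  have h1 : surprise G ζ' = ((p - intraPairs ζ').choose (m - intraPairs ζ') : ℚ) / (p.choose m) := by
    unfold surprise
    rw [hcl]
    exact surpriseVal_self p m (intraPairs ζ') ham
  have h2 : (((intraPairs ζ).choose i0 : ℚ) * (((p - intraPairs ζ).choose (m - i0) : ℕ) : ℚ))
      / (p.choose m) ≤ surprise G ζ :=
    surpriseVal_term_le p m (intraPairs ζ) (intraEdges G ζ) i0 hi0 hi0m hmp
  have h3 := le_trans h2 (le_trans hopt (le_of_eq h1))
  have hpos : (0:ℚ) < (p.choose m : ℚ) := by exact_mod_cast Nat.choose_pos hmp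
  rw [div_le_div_iff_of_pos_right hpos] at h3
  exact_mod_cast h3


/-! ### the reference partition -/

variable {X : Type} [Fintype X] [DecidableEq X] (M : Finset (Finset X))

def cliquePart (s : {s // s ∈ M}) : Finset (RVertex M) :=
  (univ : Finset (Fin ((3 * M.card) ^ 2))).map
    ⟨fun i => Sum.inl (s, i), fun i j h => by simpa using h⟩

def xPart : Finset (RVertex M) := (univ : Finset X).map ⟨Sum.inr, Sum.inr_injective⟩

lemma mem_cliquePart {s : {s // s ∈ M}} {v : RVertex M} :
    v ∈ cliquePart M s ↔ ∃ i, v = Sum.inl (s, i) := by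
  simp [cliquePart, eq_comm]
  exact Iff.rfl

lemma mem_xPart {v : RVertex M} : v ∈ xPart M ↔ ∃ x, v = Sum.inr x := by
  simp [xPart, eq_comm]

def refParts : Finset (Finset (RVertex M)) := insert (xPart M) (M.attach.image (cliquePart M))

lemma part_cases {P : Finset (RVertex M)} (h : P ∈ refParts M) :
    P = xPart M ∨ ∃ s, P = cliquePart M s := by
  rcases Finset.mem_insert.mp h with h | h
  · exact Or.inl h
  · obtain ⟨s, _, rfl⟩ := Finset.mem_image.mp h
    exact Or.inr ⟨s, rfl⟩

variable (hM : 0 < M.card) (hX : Nonempty X)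

include hM in
lemma cliquePart_ne_xPart (s : {s // s ∈ M}) : cliquePart M s ≠ xPart M := by
  intro h
  have hpos : 0 < (3 * M.card) ^ 2 := by positivity
  have hv : (Sum.inl (s, ⟨0, hpos⟩) : RVertex M) ∈ cliquePart M s :=
    (mem_cliquePart M).mpr ⟨_, rfl⟩
  rw [h, mem_xPart] at hv
  obtain ⟨x, hx⟩ := hv
  exact absurd hx (by simp)

def refPartition : Finpartition (univ : Finset (RVertex M)) where
  parts := refParts M
  supIndep := by
    rw [Finset.supIndep_iff_pairwiseDisjoint]
    intro P hP Q hQ hne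
    rw [Finset.mem_coe] at hP hQ
    rw [Function.onFun, Finset.disjoint_left]
    intro v hvP hvQ
    rcases part_cases M hP with rfl | ⟨s, rfl⟩ <;> rcases part_cases M hQ with rfl | ⟨t, rfl⟩
    · exact hne rfl
    · obtain ⟨x, rfl⟩ := (mem_xPart M).mp hvP
      obtain ⟨i, hi⟩ := (mem_cliquePart M).mp hvQ
      exact absurd hi (by simp)
    · obtain ⟨x, rfl⟩ := (mem_xPart M).mp hvQ
      obtain ⟨i, hi⟩ := (mem_cliquePart M).mp hvP
      exact absurd hi (by simp)
    · obtain ⟨i, rfl⟩ := (mem_cliquePart M).mp hvP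
      obtain ⟨j, hj⟩ := (mem_cliquePart M).mp hvQ
      have hst : s = t := by
        have := hj
        simp only [Sum.inl.injEq, Prod.mk.injEq] at this
        exact this.1
      exact hne (by rw [hst])
  sup_parts := by
    apply le_antisymm
    · exact Finset.sup_le fun P _ => Finset.subset_univ P
    · intro v _
      rw [Finset.mem_sup]
      rcases v with ⟨s, i⟩ | x
      · refine ⟨cliquePart M s, ?_, (mem_cliquePart M).mpr ⟨i, rfl⟩⟩
        exact Finset.mem_insert_of_mem (Finset.mem_image_of_mem _ (Finset.mem_attach _ s))
      · exact ⟨xPart M, Finset.mem_insert_self _ _, (mem_xPart M).mpr ⟨x, rfl⟩⟩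
  bot_notMem := by
    intro h
    rcases part_cases M h with h | ⟨s, h⟩
    · have : (xPart M).Nonempty := by
        obtain ⟨x⟩ := hX
        exact ⟨Sum.inr x, (mem_xPart M).mpr ⟨x, rfl⟩⟩
      rw [← h] at this
      simp at this
    · have hpos : 0 < (3 * M.card) ^ 2 := by positivity
      have : (cliquePart M s).Nonempty := ⟨Sum.inl (s, ⟨0, hpos⟩), (mem_cliquePart M).mpr ⟨_, rfl⟩⟩
      rw [← h] at this
      simp at this

lemma card_cliquePart (s : {s // s ∈ M}) : (cliquePart M s).card = (3 * M.card) ^ 2 := by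
  simp [cliquePart]

lemma card_xPart : (xPart M).card = Fintype.card X := by
  simp [xPart]

include hM in
lemma cliquePart_injective : Function.Injective (cliquePart M) := by
  intro s t h
  have hpos : 0 < (3 * M.card) ^ 2 := by positivity
  have hv : (Sum.inl (s, ⟨0, hpos⟩) : RVertex M) ∈ cliquePart M s :=
    (mem_cliquePart M).mpr ⟨_, rfl⟩
  rw [h, mem_cliquePart] at hv
  obtain ⟨i, hi⟩ := hv
  simp only [Sum.inl.injEq, Prod.mk.injEq] at hi
  exact hi.1

lemma intraPairs_ref :
    intraPairs (refPartition M hM hX)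
      = M.card * ((3 * M.card) ^ 2).choose 2 + (Fintype.card X).choose 2 := by
  unfold intraPairs
  show ∑ P ∈ refParts M, (P.card).choose 2 = _
  unfold refParts
  rw [Finset.sum_insert, Finset.sum_image]
  · rw [card_xPart]
    simp only [card_cliquePart, Finset.sum_const, Finset.card_attach, smul_eq_mul]
    ring
  · intro s _ t _ h
    exact cliquePart_injective M hM h
  · intro h
    obtain ⟨s, _, hs⟩ := Finset.mem_image.mp h
    exact cliquePart_ne_xPart M hM s hs

lemma ref_cliques : ∀ P ∈ refParts M, ∀ u ∈ P, ∀ v ∈ P, u ≠ v → (reductionGraph M).Adj u v := by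
  intro P hP u hu v hv hne
  rcases part_cases M hP with rfl | ⟨s, rfl⟩
  · obtain ⟨x, rfl⟩ := (mem_xPart M).mp hu
    obtain ⟨y, rfl⟩ := (mem_xPart M).mp hv
    have hxy : x ≠ y := fun h => hne (by rw [h])
    exact hxy
  · obtain ⟨i, rfl⟩ := (mem_cliquePart M).mp hu
    obtain ⟨j, rfl⟩ := (mem_cliquePart M).mp hv
    have hij : i ≠ j := fun h => hne (by rw [h])
    exact ⟨rfl, hij⟩

open scoped Classical in
include hM hX in
lemma edges_le (h3 : ∀ s ∈ M, s.card = 3) :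
    (reductionGraph M).edgeFinset.card
      ≤ intraEdges (reductionGraph M) (refPartition M hM hX) + 27 * M.card ^ 3 := by
  classical
  rw [intraEdges_eq_card_inter]
  have hsplit := Finset.card_inter_add_card_sdiff
    (reductionGraph M).edgeFinset (intraSym (refPartition M hM hX))
  suffices h : ((reductionGraph M).edgeFinset \ intraSym (refPartition M hM hX)).card
      ≤ 27 * M.card ^ 3 by omega
  have hsub : (reductionGraph M).edgeFinset \ intraSym (refPartition M hM hX) ⊆
      M.attach.biUnion (fun s =>
        ((univ : Finset (Fin ((3 * M.card) ^ 2))) ×ˢ (s : Finset X).attach).image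
          (fun q => s(Sum.inl (s, q.1), Sum.inr q.2.1))) := by
    intro e he
    obtain ⟨heE, heN⟩ := Finset.mem_sdiff.mp he
    induction e with
    | _ u v =>
      have hadj : (reductionGraph M).Adj u v := SimpleGraph.mem_edgeFinset.mp heE
      rcases u with ⟨s, i⟩ | x <;> rcases v with ⟨t, j⟩ | y
      · exfalso
        have hadj' : s = t ∧ i ≠ j := hadj
        obtain ⟨rfl, hij⟩ := hadj'
        refine heN (mem_intraSym.mpr ⟨?_, cliquePart M s, ?_, ?_⟩)
        · simp only [Sym2.isDiag_iff_proj_eq]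
          intro h
          exact hij (by simpa using h)
        · exact Finset.mem_insert_of_mem (Finset.mem_image_of_mem _ (Finset.mem_attach _ s))
        · intro w hw
          rw [Sym2.mem_iff] at hw
          rcases hw with rfl | rfl
          · exact (mem_cliquePart M).mpr ⟨i, rfl⟩
          · exact (mem_cliquePart M).mpr ⟨j, rfl⟩
      · have hy : y ∈ (s : Finset X) := hadj
        rw [Finset.mem_biUnion]
        refine ⟨s, Finset.mem_attach _ s, Finset.mem_image.mpr ⟨(i, ⟨y, hy⟩), ?_, rfl⟩⟩
        exact Finset.mem_product.mpr ⟨Finset.mem_univ _, Finset.mem_attach _ _⟩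
      · have hx : x ∈ (t : Finset X) := hadj
        rw [Sym2.eq_swap, Finset.mem_biUnion]
        refine ⟨t, Finset.mem_attach _ t, Finset.mem_image.mpr ⟨(j, ⟨x, hx⟩), ?_, rfl⟩⟩
        exact Finset.mem_product.mpr ⟨Finset.mem_univ _, Finset.mem_attach _ _⟩
      · exfalso
        have hxy : x ≠ y := hadj
        refine heN (mem_intraSym.mpr ⟨?_, xPart M, Finset.mem_insert_self _ _, ?_⟩)
        · simp only [Sym2.isDiag_iff_proj_eq]
          intro h
          exact hxy (by simpa using h)
        · intro w hw
          rw [Sym2.mem_iff] at hw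
          rcases hw with rfl | rfl
          · exact (mem_xPart M).mpr ⟨x, rfl⟩
          · exact (mem_xPart M).mpr ⟨y, rfl⟩
  calc ((reductionGraph M).edgeFinset \ intraSym (refPartition M hM hX)).card
      ≤ (M.attach.biUnion fun s =>
          ((univ : Finset (Fin ((3 * M.card) ^ 2))) ×ˢ (s : Finset X).attach).image
            (fun q => s(Sum.inl (s, q.1), Sum.inr q.2.1))).card := Finset.card_le_card hsub
    _ ≤ ∑ s ∈ M.attach,
          (((univ : Finset (Fin ((3 * M.card) ^ 2))) ×ˢ (s : Finset X).attach).image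
            (fun q => s(Sum.inl (s, q.1), Sum.inr q.2.1))).card := Finset.card_biUnion_le
    _ ≤ ∑ s ∈ M.attach,
          (((univ : Finset (Fin ((3 * M.card) ^ 2))) ×ˢ (s : Finset X).attach)).card :=
        Finset.sum_le_sum fun s _ => Finset.card_image_le
    _ = ∑ s ∈ M.attach, (3 * M.card) ^ 2 * 3 := by
        refine Finset.sum_congr rfl fun s _ => ?_
        rw [Finset.card_product, Finset.card_attach, Finset.card_univ, Fintype.card_fin,
          h3 s.1 s.2]
    _ = 27 * M.card ^ 3 := by
        rw [Finset.sum_const, Finset.card_attach, smul_eq_mul]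
        ring


end Stmt15Aux

/-- There is a constant `c > 0` such that for every X3S instance `(X, M)` with
`r := 3|M| ≥ c`, every surprise-optimal clustering `ζ` of the reduction graph
satisfies `i_p(ζ) − i_e(ζ) ≤ r⁴/2`. -/
theorem stmt15 :
    ∃ c : ℕ, 0 < c ∧
      ∀ (X : Type) [Fintype X] [DecidableEq X] (M : Finset (Finset X)),
        M.Nonempty → (∀ s ∈ M, s.card = 3) → (∀ x : X, ∃ s ∈ M, x ∈ s) →
        c ≤ 3 * M.card →
        ∀ ζ : Finpartition (univ : Finset (RVertex M)),
          (∀ ζ' : Finpartition (univ : Finset (RVertex M)),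
            surprise (reductionGraph M) ζ ≤ surprise (reductionGraph M) ζ') →
          (intraPairs ζ : ℚ) - (intraEdges (reductionGraph M) ζ : ℚ)
            ≤ (3 * M.card : ℚ) ^ 4 / 2 := by
  classical
  refine ⟨120000, by norm_num, ?_⟩
  intro X _ _ M hM h3 hcover hc ζ hopt
  classical
  have hMpos : 0 < M.card := hM.card_pos
  have hX : Nonempty X := by
    obtain ⟨s, hs⟩ := hM
    have hsne : s.Nonempty := Finset.card_pos.mp (by rw [h3 s hs]; norm_num)
    obtain ⟨x, _⟩ := hsne
    exact ⟨x⟩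
  have hk : 40000 ≤ M.card := by omega
  set G := reductionGraph M with hG
  set ζ₀ := Stmt15Aux.refPartition M hMpos hX with hζ₀
  have hparts : ζ₀.parts = Stmt15Aux.refParts M := rfl
  have hcl : intraEdges G ζ₀ = intraPairs ζ₀ := by
    refine Stmt15Aux.intraEdges_eq_intraPairs_of_cliques G ζ₀ ?_
    rw [hparts]
    exact Stmt15Aux.ref_cliques M
  have hstar := Stmt15Aux.term_le_of_opt G ζ ζ₀ (hopt ζ₀) hcl (intraEdges G ζ) le_rfl
    (Stmt15Aux.intraEdges_le_edges G ζ)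
  have hstar2 := Stmt15Aux.term_le_of_opt G ζ ζ₀ (hopt ζ₀) hcl G.edgeFinset.card
    (Stmt15Aux.intraEdges_le_edges G ζ) le_rfl
  rw [Nat.sub_self, Nat.choose_zero_right, mul_one] at hstar2
  -- cardinalities
  have hcard : Fintype.card (RVertex M) = 9 * M.card ^ 3 + Fintype.card X := by
    show Fintype.card (({s // s ∈ M} × Fin ((3 * M.card) ^ 2)) ⊕ X) = _
    rw [Fintype.card_sum, Fintype.card_prod, Fintype.card_coe, Fintype.card_fin]
    have : M.card * (3 * M.card) ^ 2 = 9 * M.card ^ 3 := by ring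
    omega
  have h2p : 2 * ((Fintype.card (RVertex M)).choose 2)
      = (9 * M.card ^ 3 + Fintype.card X) * (9 * M.card ^ 3 + Fintype.card X - 1) := by
    rw [hcard, Stmt15Aux.two_mul_choose_two]
  have hx3 : 3 ≤ Fintype.card X := by
    obtain ⟨s, hs⟩ := hM
    calc 3 = s.card := (h3 s hs).symm
      _ ≤ (univ : Finset X).card := Finset.card_le_univ s
      _ = Fintype.card X := Finset.card_univ
  have hxk : Fintype.card X ≤ 3 * M.card := by
    have hcov : (univ : Finset X) ⊆ M.biUnion id := by
      intro x _
      obtain ⟨s, hs, hxs⟩ := hcover x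
      exact Finset.mem_biUnion.mpr ⟨s, hs, hxs⟩
    calc Fintype.card X = (univ : Finset X).card := Finset.card_univ.symm
      _ ≤ (M.biUnion id).card := Finset.card_le_card hcov
      _ ≤ ∑ s ∈ M, (id s).card := Finset.card_biUnion_le
      _ = ∑ _s ∈ M, 3 := Finset.sum_congr rfl (fun s hs => h3 s hs)
      _ = 3 * M.card := by rw [Finset.sum_const, smul_eq_mul]; ring
  have haval : intraPairs ζ₀
      = M.card * ((3 * M.card) ^ 2).choose 2 + (Fintype.card X).choose 2 :=
    Stmt15Aux.intraPairs_ref M hMpos hX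
  have h2a : 2 * intraPairs ζ₀
      = 9 * M.card ^ 3 * (9 * M.card ^ 2 - 1) + Fintype.card X * (Fintype.card X - 1) := by
    rw [haval]
    calc 2 * (M.card * ((3 * M.card) ^ 2).choose 2 + (Fintype.card X).choose 2)
        = M.card * (2 * ((3 * M.card) ^ 2).choose 2) + 2 * (Fintype.card X).choose 2 := by ring
      _ = M.card * ((3 * M.card) ^ 2 * ((3 * M.card) ^ 2 - 1))
            + Fintype.card X * (Fintype.card X - 1) := by
          rw [Stmt15Aux.two_mul_choose_two, Stmt15Aux.two_mul_choose_two]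
      _ = _ := by
          rw [show (3 * M.card) ^ 2 = 9 * M.card ^ 2 by ring]
          ring
  have hma : intraPairs ζ₀ ≤ G.edgeFinset.card := by
    rw [← hcl]; exact Stmt15Aux.intraEdges_le_edges G ζ₀
  have hm_up : G.edgeFinset.card ≤ intraPairs ζ₀ + 27 * M.card ^ 3 := by
    have := Stmt15Aux.edges_le M hMpos hX h3
    rwa [← hζ₀, ← hG, hcl] at this
  have hmp : G.edgeFinset.card ≤ (Fintype.card (RVertex M)).choose 2 :=
    Stmt15Aux.edges_le_choose G
  have key := Stmt15Aux.main_arith M.card (Fintype.card X) (intraPairs ζ₀)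
    G.edgeFinset.card ((Fintype.card (RVertex M)).choose 2) (intraPairs ζ) (intraEdges G ζ)
    hk hx3 hxk (by omega) (by omega) hma hm_up h2p hmp
    (Stmt15Aux.intraEdges_le_intraPairs G ζ) (Stmt15Aux.intraEdges_le_edges G ζ)
    (Stmt15Aux.intraPairs_le_choose ζ) (Stmt15Aux.intra_sum_le G ζ) hstar hstar2
  have hie_ip := Stmt15Aux.intraEdges_le_intraPairs G ζ
  have hcast : ((2 * (intraPairs ζ - intraEdges G ζ) : ℕ) : ℚ)
      ≤ ((81 * M.card ^ 4 : ℕ) : ℚ) := Nat.cast_le.mpr key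
  push_cast [Nat.cast_sub hie_ip] at hcast
  have hexp : ((3 : ℚ) * M.card) ^ 4 = 81 * (M.card : ℚ) ^ 4 := by ring
  rw [le_div_iff₀ (by norm_num : (0:ℚ) < 2)]
  linarith
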